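/- Horizontal strip containing all zeros (Equations (3.46) and (3.48)). For all x ∈ ℝ and all y ∈ ℝ with y ≠ 0, one has |∫₀^{2π} e^{i(x+iy)t} K(t) dt| ≤ ‖K‖_{L²(0,2π)} · ((1 − e^{−4πy}) / (2y))^{1/2} and |1 − e^{2πi(x+iy)}| ≥ |1 − e^{−2πy}|. Consequently, there exists b₀ > 0 depending only on ‖K‖_{L²(0,2π)} such that every zero λ of Φ satisfies |Im λ| < b₀. -/

import Mathlib

open MeasureTheory Real Complex

/-- `Φ(λ) = 1 − e^{2πiλ} + i ∫₀^{2π} e^{iλt} K(t) dt`. -/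
noncomputable def Phi (K : ℝ → ℂ) (lam : ℂ) : ℂ :=
  1 - Complex.exp (2 * Real.pi * Complex.I * lam)
    + Complex.I * ∫ t in (0:ℝ)..(2 * Real.pi), Complex.exp (Complex.I * lam * t) * K t

lemma exp_int_aux (y : ℝ) (hy : y ≠ 0) :
    ∫ t in (0:ℝ)..(2*Real.pi), Real.exp (-(2*y)*t)
      = (1 - Real.exp (-(4*Real.pi*y)))/(2*y) := by
  rw [intervalIntegral.integral_comp_mul_left (a := (0:ℝ)) (b := 2*Real.pi)
      (fun s => Real.exp s) (c := -(2*y)), integral_exp]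
  rw [mul_zero, Real.exp_zero, smul_eq_mul]
  field_simp
  ring_nf
  exact neg_ne_zero.mpr (mul_ne_zero two_ne_zero hy)

lemma cs_bound_aux (K : ℝ → ℂ)
    (hK : MeasureTheory.MemLp K 2 (MeasureTheory.volume.restrict (Set.Ioo 0 (2 * Real.pi))))
    (x y : ℝ) (hy : y ≠ 0) :
    ‖∫ t in (0:ℝ)..(2 * Real.pi),
        Complex.exp (Complex.I * (x + Complex.I * y) * t) * K t‖
      ≤ Real.sqrt (∫ t in (0:ℝ)..(2 * Real.pi), ‖K t‖ ^ 2) *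
          Real.sqrt ((1 - Real.exp (-(4 * Real.pi * y))) / (2 * y)) := by
  set μ := MeasureTheory.volume.restrict (Set.Ioo 0 (2 * Real.pi)) with hμ
  have hfin : IsFiniteMeasure μ := by
    constructor
    rw [hμ, Measure.restrict_apply_univ, Real.volume_Ioo]
    exact ENNReal.ofReal_lt_top
  have hπ : (0:ℝ) ≤ 2 * Real.pi := by positivity
  have h1 : ‖∫ t in (0:ℝ)..(2 * Real.pi),
        Complex.exp (Complex.I * (x + Complex.I * y) * t) * K t‖
      ≤ ∫ t in (0:ℝ)..(2 * Real.pi), Real.exp (-y * t) * ‖K t‖ := by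
    have := intervalIntegral.norm_integral_le_integral_norm (a := (0:ℝ)) (b := 2*Real.pi)
      (f := fun t => Complex.exp (Complex.I * (x + Complex.I * y) * t) * K t) (μ := volume) hπ
    refine this.trans_eq (intervalIntegral.integral_congr fun t ht => ?_)
    simp only [norm_mul, Complex.norm_exp]
    congr 1
    congr 1
    simp [Complex.add_re, Complex.mul_re, Complex.mul_im]
  have hconj : Real.HolderConjugate 2 2 := Real.HolderConjugate.two_two
  have hg : MemLp (fun t => ‖K t‖) (ENNReal.ofReal 2) μ := by
    have := hK.norm
    simpa [ENNReal.ofReal_ofNat] using this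
  have hf : MemLp (fun t => Real.exp (-y * t)) (ENNReal.ofReal 2) μ := by
    refine MemLp.of_bound ?_ (Real.exp (2 * Real.pi * |y|)) ?_
    · exact (Real.continuous_exp.comp (continuous_const.mul continuous_id)).aestronglyMeasurable
    · rw [hμ]
      filter_upwards [ae_restrict_mem measurableSet_Ioo] with t ht
      rw [Real.norm_eq_abs, Real.abs_exp]
      apply Real.exp_le_exp.mpr
      calc -y * t ≤ |y| * t := by
            apply mul_le_mul_of_nonneg_right _ ht.1.le
            exact (neg_le_abs y)
        _ ≤ |y| * (2 * Real.pi) := by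
            apply mul_le_mul_of_nonneg_left ht.2.le (abs_nonneg y)
        _ = 2 * Real.pi * |y| := by ring
  have hcs := MeasureTheory.integral_mul_le_Lp_mul_Lq_of_nonneg hconj
    (f := fun t => Real.exp (-y * t)) (g := fun t => ‖K t‖) (μ := μ)
    (Filter.Eventually.of_forall fun t => (Real.exp_pos _).le)
    (Filter.Eventually.of_forall fun t => norm_nonneg _) hf hg
  have hIoo : ∀ (g : ℝ → ℝ), ∫ t in (0:ℝ)..(2*Real.pi), g t = ∫ t, g t ∂μ := by
    intro g
    rw [intervalIntegral.integral_of_le hπ, hμ, MeasureTheory.integral_Ioc_eq_integral_Ioo]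
  refine h1.trans ?_
  rw [hIoo]
  refine hcs.trans ?_
  rw [mul_comm]
  apply mul_le_mul
  · rw [Real.sqrt_eq_rpow, hIoo]
    apply Real.rpow_le_rpow (by positivity) _ (by norm_num)
    apply le_of_eq
    apply MeasureTheory.integral_congr_ae
    filter_upwards with t
    rw [show (2:ℝ) = ((2:ℕ):ℝ) by norm_num, Real.rpow_natCast]
  · rw [Real.sqrt_eq_rpow, ← exp_int_aux y hy, hIoo]
    apply Real.rpow_le_rpow (by positivity) _ (by norm_num)
    apply le_of_eq
    apply MeasureTheory.integral_congr_ae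
    filter_upwards with t
    rw [show (2:ℝ) = ((2:ℕ):ℝ) by norm_num, Real.rpow_natCast, ← Real.exp_nat_mul]
    ring_nf
  · positivity
  · positivity

lemma lb_aux (x y : ℝ) :
    ‖1 - Complex.exp (2 * Real.pi * Complex.I * (x + Complex.I * y))‖
      ≥ |1 - Real.exp (-(2 * Real.pi * y))| := by
  have h := abs_norm_sub_norm_le (1:ℂ) (Complex.exp (2 * Real.pi * Complex.I * (x + Complex.I * y)))
  have hre : (2 * Real.pi * Complex.I * (x + Complex.I * y)).re = -(2 * Real.pi * y) := by
    simp [Complex.add_re, Complex.mul_re, Complex.mul_im]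
  simpa [Complex.norm_exp, hre] using h

/-- Horizontal strip containing all zeros (Equations (3.46) and (3.48)): for `y ≠ 0`,
`|∫₀^{2π} e^{i(x+iy)t} K(t) dt| ≤ ‖K‖₂ √((1 − e^{−4πy})/(2y))` and
`|1 − e^{2πi(x+iy)}| ≥ |1 − e^{−2πy}|`; consequently all zeros of `Φ` lie in a horizontal
strip `|Im λ| < b₀`. -/
theorem zeros_in_horizontal_strip
    (K : ℝ → ℂ)
    (hK : MeasureTheory.MemLp K 2 (MeasureTheory.volume.restrict (Set.Ioo 0 (2 * Real.pi)))) :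
    (∀ x y : ℝ, y ≠ 0 →
      ‖∫ t in (0:ℝ)..(2 * Real.pi),
          Complex.exp (Complex.I * (x + Complex.I * y) * t) * K t‖
        ≤ Real.sqrt (∫ t in (0:ℝ)..(2 * Real.pi), ‖K t‖ ^ 2) *
            Real.sqrt ((1 - Real.exp (-(4 * Real.pi * y))) / (2 * y)) ∧
      ‖1 - Complex.exp (2 * Real.pi * Complex.I * (x + Complex.I * y))‖
        ≥ |1 - Real.exp (-(2 * Real.pi * y))|) ∧
    ∃ b₀ : ℝ, 0 < b₀ ∧ ∀ lam : ℂ, Phi K lam = 0 → |lam.im| < b₀ := by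
  refine ⟨fun x y hy => ⟨cs_bound_aux K hK x y hy, lb_aux x y⟩, ?_⟩
  set A := ∫ t in (0:ℝ)..(2 * Real.pi), ‖K t‖ ^ 2 with hAdef
  have hπ : (0:ℝ) ≤ 2 * Real.pi := by positivity
  have hA : 0 ≤ A := intervalIntegral.integral_nonneg hπ (fun t _ => by positivity)
  refine ⟨2 * A + 1, by positivity, fun lam hlam => ?_⟩
  by_contra hcon
  push_neg at hcon
  set y := lam.im with hydef
  set x := lam.re with hxdef
  have hb1 : (1:ℝ) ≤ 2 * A + 1 := by linarith
  have hyb : 2 * A + 1 ≤ |y| := hcon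
  have hy0 : y ≠ 0 := by
    intro h
    rw [h] at hyb
    simp at hyb
    linarith
  have hlameq : (x:ℂ) + Complex.I * y = lam := by
    rw [mul_comm]
    exact Complex.re_add_im lam
  -- From Phi = 0 : |1 - e^{2πiλ}| = |∫|
  have hPhieq : ‖1 - Complex.exp (2 * Real.pi * Complex.I * ((x:ℂ) + Complex.I * y))‖
      = ‖∫ t in (0:ℝ)..(2 * Real.pi),
          Complex.exp (Complex.I * ((x:ℂ) + Complex.I * y) * t) * K t‖ := by
    rw [hlameq]
    unfold Phi at hlam
    have : 1 - Complex.exp (2 * Real.pi * Complex.I * lam)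
        = -(Complex.I * ∫ t in (0:ℝ)..(2 * Real.pi), Complex.exp (Complex.I * lam * t) * K t) := by
      linear_combination hlam
    rw [this]
    simp
  have hchain : |1 - Real.exp (-(2 * Real.pi * y))|
      ≤ Real.sqrt A * Real.sqrt ((1 - Real.exp (-(4 * Real.pi * y))) / (2 * y)) :=
    (lb_aux x y).trans (hPhieq.trans_le (cs_bound_aux K hK x y hy0))
  rw [← Real.sqrt_mul hA] at hchain
  -- numerics
  have hpi3 : (3:ℝ) < Real.pi := Real.pi_gt_three
  have h2pi1 : (1:ℝ) ≤ 2 * Real.pi := by linarith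
  have hexp2 : ∀ s : ℝ, 1 ≤ s → (2:ℝ) ≤ Real.exp (2 * Real.pi * s) := by
    intro s hs
    have h1 : (1:ℝ) ≤ 2 * Real.pi * s := by nlinarith
    nlinarith [Real.add_one_le_exp (2 * Real.pi * s)]
  rcases lt_or_gt_of_ne hy0 with hneg | hpos
  · -- y < 0 : set s = -y ≥ 2A+1 ≥ 1
    set s := -y with hs
    have hsb : 2 * A + 1 ≤ s := by
      rw [abs_of_neg hneg] at hyb; exact hyb
    have hs1 : (1:ℝ) ≤ s := by linarith
    have he2 : (2:ℝ) ≤ Real.exp (2 * Real.pi * s) := hexp2 s hs1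
    have hL : Real.exp (2 * Real.pi * s) / 2 ≤ |1 - Real.exp (-(2 * Real.pi * y))| := by
      have : -(2 * Real.pi * y) = 2 * Real.pi * s := by rw [hs]; ring
      rw [this, abs_of_nonpos (by nlinarith)]
      nlinarith
    have hX : (1 - Real.exp (-(4 * Real.pi * y))) / (2 * y)
        ≤ Real.exp (4 * Real.pi * s) / (2 * s) := by
      have hy2 : -(4 * Real.pi * y) = 4 * Real.pi * s := by rw [hs]; ring
      have hs0 : s ≠ 0 := by linarith
      have heq : (1 - Real.exp (4 * Real.pi * s)) / (2 * y)
          = (Real.exp (4 * Real.pi * s) - 1) / (2 * s) := by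
        rw [hs]; field_simp; ring
      rw [hy2, heq]
      gcongr
      linarith
    have hAX : A * ((1 - Real.exp (-(4 * Real.pi * y))) / (2 * y))
        < (Real.exp (2 * Real.pi * s) / 2) ^ 2 := by
      have hsq : (Real.exp (2 * Real.pi * s)) ^ 2 = Real.exp (4 * Real.pi * s) := by
        rw [sq, ← Real.exp_add]; ring_nf
      have h1 : A * ((1 - Real.exp (-(4 * Real.pi * y))) / (2 * y))
          ≤ A * (Real.exp (4 * Real.pi * s) / (2 * s)) :=
        mul_le_mul_of_nonneg_left hX hA
      have h2 : A * (Real.exp (4 * Real.pi * s) / (2 * s))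
          < Real.exp (4 * Real.pi * s) / 4 := by
        rw [← mul_div_assoc, div_lt_div_iff₀ (by linarith) (by norm_num : (0:ℝ) < 4)]
        nlinarith [mul_pos (Real.exp_pos (4 * Real.pi * s))
          (show (0:ℝ) < 2 * s - 4 * A by linarith)]
      calc _ ≤ _ := h1
        _ < Real.exp (4 * Real.pi * s) / 4 := h2
        _ = (Real.exp (2 * Real.pi * s) / 2) ^ 2 := by rw [div_pow, hsq]; norm_num
    have := (Real.sqrt_lt' (by positivity)).mpr hAX
    linarith [hchain, hL]
  · -- y > 0 : y ≥ 2A+1 ≥ 1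
    have hsb : 2 * A + 1 ≤ y := by rw [abs_of_pos hpos] at hyb; exact hyb
    have hy1 : (1:ℝ) ≤ y := by linarith
    have he2 : (2:ℝ) ≤ Real.exp (2 * Real.pi * y) := hexp2 y hy1
    have hexpy : Real.exp (-(2 * Real.pi * y)) ≤ 1/2 := by
      rw [Real.exp_neg]
      rw [inv_le_comm₀ (Real.exp_pos _) (by norm_num)]
      linarith
    have hL : (1:ℝ)/2 ≤ |1 - Real.exp (-(2 * Real.pi * y))| := by
      rw [_root_.abs_of_nonneg (by nlinarith [Real.exp_pos (-(2 * Real.pi * y))])]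
      linarith
    have hAX : A * ((1 - Real.exp (-(4 * Real.pi * y))) / (2 * y)) < (1/2 : ℝ) ^ 2 := by
      have hX : (1 - Real.exp (-(4 * Real.pi * y))) / (2 * y) ≤ 1 / (2 * y) := by
        apply div_le_div_of_nonneg_right _ (by linarith)
        · nlinarith [Real.exp_pos (-(4 * Real.pi * y))]
      calc A * ((1 - Real.exp (-(4 * Real.pi * y))) / (2 * y)) ≤ A * (1 / (2 * y)) :=
            mul_le_mul_of_nonneg_left hX hA
        _ < (1/2 : ℝ) ^ 2 := by
            rw [mul_one_div, div_lt_iff₀ (by linarith : (0:ℝ) < 2 * y)]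
            nlinarith
    have := (Real.sqrt_lt' (by norm_num)).mpr hAX
    linarith [hchain, hL]
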